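/- The three 1-spaces ⟨e_1⟩, ⟨e_2⟩, ⟨e_1+e_2⟩ of F_q^2 with q ≥ 3 form an MSR subspace family: for α ∈ F_q \ {0,1}, the matrices g_1 = [[1,0],[α,1-α]], g_2 = [[1-α^{-1}, α^{-1}],[0,1]], g_3 = [[1,0],[0,α]] witness this, with S_i^{g_i} = ⟨e_1 + α e_2⟩ for each i. -/

import Mathlib

open Submodule Module Matrix

/-- MSR subspace family. -/
def IsMSRFamily {F V : Type*} [Field F] [AddCommGroup V] [Module F V]
    (m : ℕ) (𝒮 : Set (Submodule F V)) : Prop :=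
  (∀ S ∈ 𝒮, finrank F S = m) ∧
  ∀ S ∈ 𝒮, ∃ g : V ≃ₗ[F] V,
    S.map (g : V →ₗ[F] V) ⊓ S = ⊥ ∧
    ∀ T ∈ 𝒮, T ≠ S → T.map (g : V →ₗ[F] V) = T


theorem msr_aux1 {F : Type*} [Field F] (α : F) (h : (1:F) - α ≠ 0) :
    !![1, 0; α, 1 - α] * !![1, 0; -α/(1-α), (1-α)⁻¹] = (1 : Matrix (Fin 2) (Fin 2) F) ∧
    !![1, 0; -α/(1-α), (1-α)⁻¹] * !![1, 0; α, 1 - α] = (1 : Matrix (Fin 2) (Fin 2) F) := by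
  constructor <;>
  · ext i j; fin_cases i <;> fin_cases j <;>
      simp [Matrix.mul_apply, Fin.sum_univ_two] <;> field_simp <;> ring

theorem msr_aux2 {F : Type*} [Field F] (β : F) (h : (1:F) - β ≠ 0) :
    !![1 - β, β; 0, 1] * !![(1-β)⁻¹, -β/(1-β); 0, 1] = (1 : Matrix (Fin 2) (Fin 2) F) ∧
    !![(1-β)⁻¹, -β/(1-β); 0, 1] * !![1 - β, β; 0, 1] = (1 : Matrix (Fin 2) (Fin 2) F) := by
  constructor <;>
  · ext i j; fin_cases i <;> fin_cases j <;>
      simp [Matrix.mul_apply, Fin.sum_univ_two] <;> field_simp <;> ring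

theorem msr_aux3 {F : Type*} [Field F] (α : F) (h : α ≠ 0) :
    !![(1:F), 0; 0, α] * !![(1:F), 0; 0, α⁻¹] = (1 : Matrix (Fin 2) (Fin 2) F) ∧
    !![(1:F), 0; 0, α⁻¹] * !![(1:F), 0; 0, α] = (1 : Matrix (Fin 2) (Fin 2) F) := by
  constructor <;>
  · ext i j; fin_cases i <;> fin_cases j <;>
      simp [Matrix.mul_apply, Fin.sum_univ_two] <;> field_simp

/-- For `q ≥ 3` and `α ∈ F_q \ {0,1}`, the three points `⟨e₁⟩, ⟨e₂⟩, ⟨e₁+e₂⟩` of `F_q^2`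
form an MSR subspace family, witnessed by the matrices
`g₁ = [[1,0],[α,1-α]]`, `g₂ = [[1-α⁻¹,α⁻¹],[0,1]]`, `g₃ = [[1,0],[0,α]]`
(acting by left multiplication on column vectors), with `Sᵢ^{gᵢ} = ⟨e₁ + α e₂⟩` and
`Sⱼ^{gᵢ} = Sⱼ` for `j ≠ i`. -/
theorem stmt6 (F : Type*) [Field F] [Fintype F] (hq : 3 ≤ Fintype.card F)
    (α : F) (hα0 : α ≠ 0) (hα1 : α ≠ 1) :
    let S₁ : Submodule F (Fin 2 → F) := span F {![1, 0]}
    let S₂ : Submodule F (Fin 2 → F) := span F {![0, 1]}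
    let S₃ : Submodule F (Fin 2 → F) := span F {![1, 1]}
    let T : Submodule F (Fin 2 → F) := span F {![1, α]}
    let g₁ := Matrix.mulVecLin !![1, 0; α, 1 - α]
    let g₂ := Matrix.mulVecLin !![1 - α⁻¹, α⁻¹; 0, 1]
    let g₃ := Matrix.mulVecLin !![(1 : F), 0; 0, α]
    (S₁.map g₁ = T ∧ S₂.map g₁ = S₂ ∧ S₃.map g₁ = S₃) ∧
    (S₂.map g₂ = T ∧ S₁.map g₂ = S₁ ∧ S₃.map g₂ = S₃) ∧
    (S₃.map g₃ = T ∧ S₁.map g₃ = S₁ ∧ S₂.map g₃ = S₂) ∧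
    (T ⊓ S₁ = ⊥ ∧ T ⊓ S₂ = ⊥ ∧ T ⊓ S₃ = ⊥) ∧
    IsMSRFamily 1 {S₁, S₂, S₃} := by
  intro S₁ S₂ S₃ T g₁ g₂ g₃
  have h1α : (1:F) - α ≠ 0 := sub_ne_zero.mpr (Ne.symm hα1)
  have hαi : α⁻¹ ≠ 0 := inv_ne_zero hα0
  have h1αi : (1:F) - α⁻¹ ≠ 0 := by
    intro h
    apply hα1
    have h2 : α⁻¹ = 1 := by linear_combination -h
    field_simp at h2
    exact h2.symm
  have mapspan : ∀ (M : Matrix (Fin 2) (Fin 2) F) (v : Fin 2 → F),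
      (span F {v}).map M.mulVecLin = span F {M.mulVec v} := by
    intro M v
    rw [Submodule.map_span, Set.image_singleton, Matrix.mulVecLin_apply]
  have smulspan : ∀ (c : F), c ≠ 0 → ∀ v : Fin 2 → F, span F {c • v} = span F {v} :=
    fun c hc v => Submodule.span_singleton_smul_eq (Units.mk0 c hc).isUnit v
  have m11 : S₁.map g₁ = T := by
    rw [mapspan, show Matrix.mulVec !![1, 0; α, 1 - α] ![(1:F),0] = ![1,α] by
      funext i; fin_cases i <;> simp [Matrix.mulVec, dotProduct]]
  have m12 : S₂.map g₁ = S₂ := by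
    rw [mapspan, show Matrix.mulVec !![1, 0; α, 1 - α] ![(0:F),1] = (1-α) • ![0,1] by
      funext i; fin_cases i <;> simp [Matrix.mulVec, dotProduct]]
    exact smulspan _ h1α _
  have m13 : S₃.map g₁ = S₃ := by
    rw [mapspan, show Matrix.mulVec !![1, 0; α, 1 - α] ![(1:F),1] = ![1,1] by
      funext i; fin_cases i <;> simp [Matrix.mulVec, dotProduct]]
  have m22 : S₂.map g₂ = T := by
    rw [mapspan, show Matrix.mulVec !![1 - α⁻¹, α⁻¹; 0, 1] ![(0:F),1] = α⁻¹ • ![1,α] by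
      funext i; fin_cases i <;> simp [Matrix.mulVec, dotProduct] <;> field_simp]
    exact smulspan _ hαi _
  have m21 : S₁.map g₂ = S₁ := by
    rw [mapspan, show Matrix.mulVec !![1 - α⁻¹, α⁻¹; 0, 1] ![(1:F),0] = (1-α⁻¹) • ![1,0] by
      funext i; fin_cases i <;> simp [Matrix.mulVec, dotProduct]]
    exact smulspan _ h1αi _
  have m23 : S₃.map g₂ = S₃ := by
    rw [mapspan, show Matrix.mulVec !![1 - α⁻¹, α⁻¹; 0, 1] ![(1:F),1] = ![1,1] by
      funext i; fin_cases i <;> simp [Matrix.mulVec, dotProduct]]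
  have m33 : S₃.map g₃ = T := by
    rw [mapspan, show Matrix.mulVec !![(1:F), 0; 0, α] ![(1:F),1] = ![1,α] by
      funext i; fin_cases i <;> simp [Matrix.mulVec, dotProduct]]
  have m31 : S₁.map g₃ = S₁ := by
    rw [mapspan, show Matrix.mulVec !![(1:F), 0; 0, α] ![(1:F),0] = ![1,0] by
      funext i; fin_cases i <;> simp [Matrix.mulVec, dotProduct]]
  have m32 : S₂.map g₃ = S₂ := by
    rw [mapspan, show Matrix.mulVec !![(1:F), 0; 0, α] ![(0:F),1] = α • ![0,1] by
      funext i; fin_cases i <;> simp [Matrix.mulVec, dotProduct]]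
    exact smulspan _ hα0 _
  have i1 : T ⊓ S₁ = ⊥ := by
    rw [eq_bot_iff]
    rintro x ⟨hx1, hx2⟩
    rw [SetLike.mem_coe, Submodule.mem_span_singleton] at hx1 hx2
    obtain ⟨a, rfl⟩ := hx1
    obtain ⟨b, hb⟩ := hx2
    have h1 := congr_fun hb 1
    simp [Pi.smul_apply] at h1
    have ha : a = 0 := by
      rcases h1 with h1 | h1
      · exact h1
      · exact absurd h1 hα0
    simp [ha]
  have i2 : T ⊓ S₂ = ⊥ := by
    rw [eq_bot_iff]
    rintro x ⟨hx1, hx2⟩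
    rw [SetLike.mem_coe, Submodule.mem_span_singleton] at hx1 hx2
    obtain ⟨a, rfl⟩ := hx1
    obtain ⟨b, hb⟩ := hx2
    have h0 := congr_fun hb 0
    simp [Pi.smul_apply] at h0
    have ha : a = 0 := h0.symm
    simp [ha]
  have i3 : T ⊓ S₃ = ⊥ := by
    rw [eq_bot_iff]
    rintro x ⟨hx1, hx2⟩
    rw [SetLike.mem_coe, Submodule.mem_span_singleton] at hx1 hx2
    obtain ⟨a, rfl⟩ := hx1
    obtain ⟨b, hb⟩ := hx2
    have h0 := congr_fun hb 0
    have h1 := congr_fun hb 1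
    simp [Pi.smul_apply] at h0 h1
    have ha : a = 0 := by
      by_contra hane
      apply hα1
      rw [h0] at h1
      have := h1.symm
      calc α = a⁻¹ * (a * α) := by field_simp
        _ = a⁻¹ * a := by rw [this]
        _ = 1 := by field_simp
    simp [ha]
  refine ⟨⟨m11, m12, m13⟩, ⟨m22, m21, m23⟩, ⟨m33, m31, m32⟩, ⟨i1, i2, i3⟩, ?_, ?_⟩
  · rintro S hS
    have h10 : (![1,0] : Fin 2 → F) ≠ 0 := by
      intro h; simpa using congr_fun h 0
    have h01 : (![0,1] : Fin 2 → F) ≠ 0 := by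
      intro h; simpa using congr_fun h 1
    have h11 : (![1,1] : Fin 2 → F) ≠ 0 := by
      intro h; simpa using congr_fun h 0
    rcases hS with rfl | rfl | rfl
    · exact finrank_span_singleton h10
    · exact finrank_span_singleton h01
    · exact finrank_span_singleton h11
  · have mk : ∀ (M N : Matrix (Fin 2) (Fin 2) F), M * N = 1 → N * M = 1 →
        ∃ e : (Fin 2 → F) ≃ₗ[F] (Fin 2 → F), (e : (Fin 2 → F) →ₗ[F] (Fin 2 → F)) = M.mulVecLin := by
      intro M N h1 h2
      refine ⟨LinearEquiv.ofLinear M.mulVecLin N.mulVecLin ?_ ?_, rfl⟩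
      · rw [← Matrix.mulVecLin_mul, h1, Matrix.mulVecLin_one]
      · rw [← Matrix.mulVecLin_mul, h2, Matrix.mulVecLin_one]
    obtain ⟨e₁, he₁⟩ := mk _ _ (msr_aux1 α h1α).1 (msr_aux1 α h1α).2
    obtain ⟨e₂, he₂⟩ := mk _ _ (msr_aux2 α⁻¹ h1αi).1 (msr_aux2 α⁻¹ h1αi).2
    obtain ⟨e₃, he₃⟩ := mk _ _ (msr_aux3 α hα0).1 (msr_aux3 α hα0).2
    rintro S hS
    rcases hS with rfl | rfl | rfl
    · refine ⟨e₁, ?_, ?_⟩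
      · rw [he₁, show Matrix.mulVecLin !![1, 0; α, 1 - α] = g₁ from rfl, m11]; exact i1
      · rintro T' hT' hne
        rw [he₁]
        rcases hT' with rfl | rfl | rfl
        · exact absurd rfl hne
        · exact m12
        · exact m13
    · refine ⟨e₂, ?_, ?_⟩
      · rw [he₂, show Matrix.mulVecLin !![1 - α⁻¹, α⁻¹; 0, 1] = g₂ from rfl, m22]; exact i2
      · rintro T' hT' hne
        rw [he₂]
        rcases hT' with rfl | rfl | rfl
        · exact m21
        · exact absurd rfl hne
        · exact m23
    · refine ⟨e₃, ?_, ?_⟩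
      · rw [he₃, show Matrix.mulVecLin !![(1:F), 0; 0, α] = g₃ from rfl, m33]; exact i3
      · rintro T' hT' hne
        rw [he₃]
        rcases hT' with rfl | rfl | rfl
        · exact m31
        · exact m32
        · exact absurd rfl hne
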